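/- arXiv:1612.02142 — 9 statements merged into one kernel-verified Lean document; each statement's English description precedes it below -/
import Mathlib

section
/- Let K ⊆ L be an extension of fields, Γ₀ a linearly ordered commutative group with zero, w a valuation on L with values in Γ₀, and v the restriction of w to K. If K is dense in L for the valuation topology, then the value groups coincide: for every x ∈ L with x ≠ 0 there exists y ∈ K with y ≠ 0 and w(x) = v(y). -/
/-- Lemma 2.1 (values): if `K` is dense in `L` for the valuation topology, then the
value groups coincide: every nonzero `x ∈ L` has the same value as some nonzero `y ∈ K`. -/
theorem dense_extension_value_group_eq
    {K L Γ₀ : Type*} [Field K] [Field L] [LinearOrderedCommGroupWithZero Γ₀]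
    (ι : K →+* L) (w : Valuation L Γ₀)
    (hdense : ∀ x : L, ∀ γ : Γ₀, γ ≠ 0 → ∃ y : K, w (x - ι y) < γ) :
    ∀ x : L, x ≠ 0 → ∃ y : K, y ≠ 0 ∧ w x = w (ι y) := by
  intro x hx
  have hwx : w x ≠ 0 := w.ne_zero_iff.mpr hx
  obtain ⟨y, hy⟩ := hdense x (w x) hwx
  have hsub : w (ι y - x) < w x := by rwa [w.map_sub_swap]
  have heq : w (ι y) = w x := Valuation.map_eq_of_sub_lt w hsub
  refine ⟨y, ?_, heq.symm⟩
  intro h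
  rw [h, map_zero, map_zero] at heq
  exact hwx heq.symm
end

section
/- Let K ⊆ L be an extension of fields, Γ₀ a linearly ordered commutative group with zero, w a valuation on L with values in Γ₀. If K is dense in L for the valuation topology, then for every n ≥ 1, GL_n(K) is dense in GL_n(L): for every invertible n×n matrix M over L and every nonzero γ ∈ Γ₀ there exists an invertible n×n matrix M₀ with entries in K such that w(M i j − M₀ i j) < γ for all indices i, j. -/
open Finset in
private lemma aux_prod_sub_le {ι L Γ₀ : Type*} [Field L] [LinearOrderedCommGroupWithZero Γ₀]
    (w : Valuation L Γ₀) (s : Finset ι) (f g : ι → L) (B ε : Γ₀) (hB : 1 ≤ B)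
    (hf : ∀ i ∈ s, w (f i) ≤ B) (hg : ∀ i ∈ s, w (g i) ≤ B)
    (hfg : ∀ i ∈ s, w (f i - g i) ≤ ε) :
    w (∏ i ∈ s, f i - ∏ i ∈ s, g i) ≤ ε * B ^ s.card := by
  classical
  induction s using Finset.induction_on with
  | empty => simp
  | insert _ _ ha ih =>
    rename_i a s
    rw [Finset.prod_insert ha, Finset.prod_insert ha, Finset.card_insert_of_notMem ha]
    have key : f a * ∏ i ∈ s, f i - g a * ∏ i ∈ s, g i
        = (f a - g a) * ∏ i ∈ s, f i + g a * (∏ i ∈ s, f i - ∏ i ∈ s, g i) := by ring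
    rw [key]
    have hPf : w (∏ i ∈ s, f i) ≤ B ^ s.card := by
      rw [map_prod]
      calc ∏ i ∈ s, w (f i) ≤ ∏ _i ∈ s, B :=
            Finset.prod_le_prod' (fun i hi => hf i (Finset.mem_insert_of_mem hi))
        _ = B ^ s.card := Finset.prod_const B
    refine le_trans (w.map_add _ _) (max_le ?_ ?_)
    · rw [map_mul]
      calc w (f a - g a) * w (∏ i ∈ s, f i) ≤ ε * B ^ s.card :=
            mul_le_mul' (hfg a (Finset.mem_insert_self a s)) hPf
        _ ≤ ε * B ^ (s.card + 1) := by
            rw [pow_succ, ← mul_assoc]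
            exact le_mul_of_one_le_right' hB
    · rw [map_mul]
      have ih' := ih (fun i hi => hf i (Finset.mem_insert_of_mem hi))
        (fun i hi => hg i (Finset.mem_insert_of_mem hi))
        (fun i hi => hfg i (Finset.mem_insert_of_mem hi))
      calc w (g a) * w (∏ i ∈ s, f i - ∏ i ∈ s, g i)
          ≤ B * (ε * B ^ s.card) := mul_le_mul' (hg a (Finset.mem_insert_self a s)) ih'
        _ = ε * B ^ (s.card + 1) := by rw [pow_succ, mul_left_comm, mul_comm B]

/-- Step in Lemma 2.1: if `K` is dense in `L` for the valuation topology, then `GL_n(K)`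
is dense in `GL_n(L)`: every invertible matrix over `L` can be approximated entrywise,
to any prescribed precision, by an invertible matrix with entries in `K`. -/
theorem dense_extension_GL_dense
    {K L Γ₀ : Type*} [Field K] [Field L] [LinearOrderedCommGroupWithZero Γ₀]
    (ι : K →+* L) (w : Valuation L Γ₀)
    (hdense : ∀ x : L, ∀ γ : Γ₀, γ ≠ 0 → ∃ y : K, w (x - ι y) < γ)
    (n : ℕ) (hn : 1 ≤ n) (M : Matrix (Fin n) (Fin n) L) (hM : IsUnit M)
    (γ : Γ₀) (hγ : γ ≠ 0) :
    ∃ M₀ : Matrix (Fin n) (Fin n) K, IsUnit M₀ ∧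
      ∀ i j, w (M i j - ι (M₀ i j)) < γ := by
  classical
  letI : OrderBot Γ₀ := { bot := 0, bot_le := fun a => zero_le' }
  -- δ = valuation of the determinant, nonzero
  have hdet : M.det ≠ 0 := by
    have := (Matrix.isUnit_iff_isUnit_det M).mp hM
    exact isUnit_iff_ne_zero.mp this
  set δ : Γ₀ := w M.det with hδdef
  have hδ : δ ≠ 0 := by
    simpa [hδdef] using (Valuation.ne_zero_iff w).mpr hdet
  -- B bounds all entries of M, plus 1 and γ
  set B : Γ₀ := max (max 1 γ) ((Finset.univ : Finset (Fin n × Fin n)).sup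
      (fun p => w (M p.1 p.2))) with hBdef
  have hB1 : (1 : Γ₀) ≤ B := le_max_of_le_left (le_max_left _ _)
  have hγB : γ ≤ B := le_max_of_le_left (le_max_right _ _)
  have hB0 : B ≠ 0 := ne_of_gt (lt_of_lt_of_le zero_lt_one hB1)
  have hMB : ∀ i j, w (M i j) ≤ B := fun i j =>
    le_max_of_le_right (Finset.le_sup (f := fun p : Fin n × Fin n => w (M p.1 p.2)) (Finset.mem_univ (i, j)))
  have hBn : B ^ n ≠ 0 := pow_ne_zero n hB0
  -- precision ε
  set ε : Γ₀ := min γ (δ / B ^ n) with hεdef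
  have hε : ε ≠ 0 := by
    rcases min_cases γ (δ / B ^ n) with ⟨h, _⟩ | ⟨h, _⟩
    · rw [hεdef, h]; exact hγ
    · rw [hεdef, h]; exact div_ne_zero hδ hBn
  -- choose the approximating matrix
  choose y hy using fun x => hdense x ε hε
  set M₀ : Matrix (Fin n) (Fin n) K := fun i j => y (M i j) with hM₀def
  set N : Matrix (Fin n) (Fin n) L := M₀.map ι with hNdef
  have hwMN : ∀ i j, w (M i j - N i j) < ε := fun i j => hy (M i j)
  have hNB : ∀ i j, w (N i j) ≤ B := by
    intro i j
    have : N i j = M i j - (M i j - N i j) := by ring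
    rw [this]
    refine le_trans (w.map_sub _ _) (max_le (hMB i j) ?_)
    exact le_trans (hwMN i j).le (le_trans (min_le_left _ _) hγB)
  -- the max of entrywise differences
  set εm : Γ₀ := (Finset.univ : Finset (Fin n × Fin n)).sup
      (fun p => w (M p.1 p.2 - N p.1 p.2)) with hεmdef
  have hεmlt : εm < ε := by
    rw [hεmdef]
    refine Finset.sup_lt_iff ?_ |>.mpr (fun p _ => hwMN p.1 p.2)
    exact lt_of_le_of_ne (zero_le') (Ne.symm hε)
  have hεmle : ∀ i j, w (M i j - N i j) ≤ εm := fun i j =>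
    Finset.le_sup (f := fun p : Fin n × Fin n => w (M p.1 p.2 - N p.1 p.2)) (Finset.mem_univ (i, j))
  -- determinant difference is small
  have hdetdiff : w (M.det - N.det) < δ := by
    rw [Matrix.det_apply, Matrix.det_apply, ← Finset.sum_sub_distrib]
    refine Valuation.map_sum_lt w hδ (fun σ _ => ?_)
    have hterm : Equiv.Perm.sign σ • ∏ i, M (σ i) i - Equiv.Perm.sign σ • ∏ i, N (σ i) i
        = Equiv.Perm.sign σ • (∏ i, M (σ i) i - ∏ i, N (σ i) i) := (smul_sub _ _ _).symm
    rw [hterm]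
    have hsign : w (Equiv.Perm.sign σ • (∏ i, M (σ i) i - ∏ i, N (σ i) i))
        = w (∏ i, M (σ i) i - ∏ i, N (σ i) i) := by
      rcases Int.units_eq_one_or (Equiv.Perm.sign σ) with h | h <;>
        simp [h, Units.smul_def, Valuation.map_sub_swap]
    rw [hsign]
    have hb := aux_prod_sub_le w Finset.univ (fun i => M (σ i) i) (fun i => N (σ i) i)
      B εm hB1 (fun i _ => hMB (σ i) i) (fun i _ => hNB (σ i) i)
      (fun i _ => hεmle (σ i) i)
    rw [Finset.card_univ, Fintype.card_fin] at hb
    refine lt_of_le_of_lt hb ?_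
    calc εm * B ^ n < ε * B ^ n := by
          rw [mul_comm εm _, mul_comm ε _]
          exact mul_lt_mul_of_pos_left hεmlt (zero_lt_iff.mpr hBn)
      _ ≤ (δ / B ^ n) * B ^ n := mul_le_mul_left (min_le_right _ _) _
      _ = δ := div_mul_cancel₀ δ hBn
  -- hence det N ≠ 0
  have hNdet : N.det ≠ 0 := by
    intro h
    rw [h, sub_zero] at hdetdiff
    exact absurd hdetdiff (lt_irrefl δ)
  have hM₀det : M₀.det ≠ 0 := by
    intro h
    apply hNdet
    rw [hNdef, ← RingHom.mapMatrix_apply, ← RingHom.map_det, h, map_zero]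
  refine ⟨M₀, (Matrix.isUnit_iff_isUnit_det M₀).mpr (isUnit_iff_ne_zero.mpr hM₀det), ?_⟩
  intro i j
  exact lt_of_lt_of_le (hwMN i j) (min_le_left _ _)
end

section
/- Let K ⊆ L be an extension of fields, Γ₀ a linearly ordered commutative group with zero, w a valuation on L with values in Γ₀. If K is dense in L for the valuation topology, then every O_L-lattice in Lⁿ has a basis with entries in K: for every invertible n×n matrix M over L there exists an invertible n×n matrix M₀ with entries in K such that every entry of M₀⁻¹·M and every entry of (M₀⁻¹·M)⁻¹ has w-value ≤ 1 (i.e., M₀⁻¹·M ∈ GL_n(O_L), where O_L = {x ∈ L | w(x) ≤ 1} is the valuation ring of w). -/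
open Matrix Finset

lemma val_det_le_one {L Γ₀ : Type*} [Field L] [LinearOrderedCommGroupWithZero Γ₀]
    (w : Valuation L Γ₀) {n : ℕ} (B : Matrix (Fin n) (Fin n) L)
    (h : ∀ i j, w (B i j) ≤ 1) : w B.det ≤ 1 := by
  rw [Matrix.det_apply]
  refine w.map_sum_le fun σ _ => ?_
  have key : w ((Equiv.Perm.sign σ : ℤˣ) • ∏ i, B (σ i) i) = w (∏ i, B (σ i) i) := by
    rcases Int.units_eq_one_or (Equiv.Perm.sign σ) with h1 | h1 <;>
      simp [h1, Units.smul_def]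
  rw [key, map_prod]
  exact Finset.prod_le_one (fun _ _ => zero_le') (fun i _ => h _ _)

/-- Lemma 2.1, `S_n(K) = S_n(L)`: if `K` is dense in `L` for the valuation topology,
then every `O_L`-lattice in `Lⁿ` has a basis with entries in `K`: for every invertible
matrix `M` over `L` there is an invertible matrix `M₀` over `K` with
`M₀⁻¹ · M ∈ GL_n(O_L)`, i.e. all entries of `M₀⁻¹ · M` and of its inverse have
`w`-value at most `1`. -/
theorem dense_extension_lattices_eq
    {K L Γ₀ : Type*} [Field K] [Field L] [LinearOrderedCommGroupWithZero Γ₀]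
    (ι : K →+* L) (w : Valuation L Γ₀)
    (hdense : ∀ x : L, ∀ γ : Γ₀, γ ≠ 0 → ∃ y : K, w (x - ι y) < γ)
    (n : ℕ) (hn : 1 ≤ n) (M : Matrix (Fin n) (Fin n) L) (hM : IsUnit M) :
    ∃ M₀ : Matrix (Fin n) (Fin n) K, IsUnit M₀ ∧
      (∀ i j, w (((M₀.map ι)⁻¹ * M) i j) ≤ 1) ∧
      (∀ i j, w ((((M₀.map ι)⁻¹ * M)⁻¹) i j) ≤ 1) := by
  classical
  have hMdet : IsUnit M.det := (Matrix.isUnit_iff_isUnit_det M).mp hM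
  set N := M⁻¹ with hN
  have hne : (Finset.univ : Finset (Fin n × Fin n)).Nonempty := ⟨(⟨0, hn⟩, ⟨0, hn⟩), Finset.mem_univ _⟩
  set c : Γ₀ := max (Finset.univ.sup' hne fun p : Fin n × Fin n => w (N p.1 p.2)) 1 with hc
  have hc1 : (1 : Γ₀) ≤ c := le_max_right _ _
  have hc0 : c ≠ 0 := fun h => by simp [h] at hc1
  have hγ : (c⁻¹ : Γ₀) ≠ 0 := inv_ne_zero hc0
  choose y hy using fun x => hdense x c⁻¹ hγ
  set M₀ : Matrix (Fin n) (Fin n) K := Matrix.of fun i j => y (M i j) with hM₀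
  set E : Matrix (Fin n) (Fin n) L := M₀.map ι - M with hE
  have hEij : ∀ i j, w (E i j) < c⁻¹ := by
    intro i j
    have := hy (M i j)
    rw [hE]
    simpa [hM₀, Matrix.of_apply, Matrix.sub_apply, Matrix.map_apply, Valuation.map_sub_swap] using this
  have hNle : ∀ i j, w (N i j) ≤ c := fun i j =>
    le_max_of_le_left (Finset.le_sup' (f := fun p : Fin n × Fin n => w (N p.1 p.2))
      (Finset.mem_univ (i, j)))
  have hNE : ∀ i j, w ((N * E) i j) < 1 := by
    intro i j
    rw [Matrix.mul_apply]
    refine w.map_sum_lt one_ne_zero fun k _ => ?_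
    rw [w.map_mul]
    calc w (N i k) * w (E k j) < c * c⁻¹ :=
          (mul_le_mul_of_nonneg_right (hNle i k) zero_le').trans_lt (mul_lt_mul_of_pos_left (hEij k j) (zero_lt_iff.mpr hc0))
      _ = 1 := mul_inv_cancel₀ hc0
  set A : Matrix (Fin n) (Fin n) L := 1 + N * E with hA
  have hAeq : M⁻¹ * (M₀.map ι) = A := by
    have h1 : (M₀.map ι) = M + E := by rw [hE]; abel
    rw [h1, Matrix.mul_add, Matrix.nonsing_inv_mul M hMdet, hA, hN]
  have hAoff : ∀ i j, i ≠ j → w (A i j) < 1 := by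
    intro i j hij
    rw [hA]
    simpa [Matrix.add_apply, Matrix.one_apply_ne hij] using hNE i j
  have hAdiag : ∀ i, w (A i i) = 1 := by
    intro i
    rw [hA]
    simp only [Matrix.add_apply, Matrix.one_apply_eq]
    exact w.map_one_add_of_lt (hNE i i)
  have hAij : ∀ i j, w (A i j) ≤ 1 := by
    intro i j
    rcases eq_or_ne i j with rfl | hij
    · exact (hAdiag i).le
    · exact (hAoff i j hij).le
  have hsign : ∀ (σ : Equiv.Perm (Fin n)) (x : L),
      w ((Equiv.Perm.sign σ : ℤˣ) • x) = w x := by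
    intro σ x
    rcases Int.units_eq_one_or (Equiv.Perm.sign σ) with h1 | h1 <;>
      simp [h1, Units.smul_def]
  have hdetA : w A.det = 1 := by
    rw [Matrix.det_apply]
    have h1 : w ((Equiv.Perm.sign (1 : Equiv.Perm (Fin n)) : ℤˣ) •
        ∏ i, A ((1 : Equiv.Perm (Fin n)) i) i) = 1 := by
      rw [hsign, map_prod]
      exact Finset.prod_eq_one fun i _ => hAdiag i
    rw [Valuation.map_sum_eq_of_lt w (Finset.mem_univ (1 : Equiv.Perm (Fin n)))
      ?_, h1]
    intro σ hσ
    rw [h1, hsign, map_prod]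
    have hσ1 : σ ≠ 1 := by
      simp only [Finset.mem_sdiff, Finset.mem_singleton] at hσ
      exact hσ.2
    obtain ⟨i₀, hi₀⟩ : ∃ i₀, σ i₀ ≠ i₀ := by
      by_contra h
      push_neg at h
      exact hσ1 (Equiv.ext h)
    calc ∏ i, w (A (σ i) i)
        = w (A (σ i₀) i₀) * ∏ i ∈ Finset.univ.erase i₀, w (A (σ i) i) :=
          (Finset.mul_prod_erase _ _ (Finset.mem_univ i₀)).symm
      _ ≤ w (A (σ i₀) i₀) * 1 := mul_le_mul_right
          (Finset.prod_le_one (fun _ _ => zero_le') (fun i _ => hAij _ _)) _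
      _ = w (A (σ i₀) i₀) := mul_one _
      _ < 1 := hAoff _ _ hi₀
  have hdetA0 : A.det ≠ 0 := by
    intro h
    rw [h, map_zero] at hdetA
    exact zero_ne_one hdetA
  have hdetAunit : IsUnit A.det := isUnit_iff_ne_zero.mpr hdetA0
  have hMι : M₀.map ι = M * A := by
    rw [← hAeq, ← Matrix.mul_assoc, Matrix.mul_nonsing_inv M hMdet, one_mul]
  have hM₀unit : IsUnit M₀ := by
    rw [Matrix.isUnit_iff_isUnit_det, isUnit_iff_ne_zero]
    intro h
    have : (M₀.map ι).det = 0 := by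
      have h2 := ι.map_det M₀
      rw [RingHom.mapMatrix_apply] at h2
      rw [← h2, h, map_zero]
    rw [hMι, Matrix.det_mul] at this
    rcases mul_eq_zero.mp this with h' | h'
    · exact hMdet.ne_zero h'
    · exact hdetA0 h'
  have hGeq : (M₀.map ι)⁻¹ * M = A⁻¹ := by
    rw [← hAeq, Matrix.mul_inv_rev, Matrix.nonsing_inv_nonsing_inv M hMdet]
  have hGinv : ((M₀.map ι)⁻¹ * M)⁻¹ = A := by
    rw [hGeq, Matrix.nonsing_inv_nonsing_inv A hdetAunit]
  refine ⟨M₀, hM₀unit, ?_, ?_⟩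
  · intro i j
    rw [hGeq, Matrix.inv_def]
    simp only [Matrix.smul_apply, smul_eq_mul, w.map_mul]
    have hinv : w (Ring.inverse A.det) = 1 := by
      rw [Ring.inverse_eq_inv', map_inv₀, hdetA, inv_one]
    rw [hinv, one_mul]
    rw [Matrix.adjugate_apply]
    refine val_det_le_one w _ fun k l => ?_
    rcases eq_or_ne k j with rfl | hkj
    · rw [Matrix.updateRow_self]
      rcases eq_or_ne l i with rfl | hli
      · simp
      · simp [Pi.single_apply, hli]
    · rw [Matrix.updateRow_ne hkj]
      exact hAij k l
  · intro i j
    rw [hGinv]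
    exact hAij i j
end

section
/- Let p be a prime, K a separably closed field of characteristic p, Γ₀ a linearly ordered commutative group with zero, and v a nontrivial valuation on K with values in Γ₀. Then the value group of v is divisible: for every a ∈ K with a ≠ 0 and every integer n ≥ 1 there exists x ∈ K with x ≠ 0 and v(x)^n = v(a). -/
open Polynomial

section aux

variable {K Γ₀ : Type*} [Field K] [LinearOrderedCommGroupWithZero Γ₀]

/-- The key `p`-th root step. -/
lemma SepClosed.aux_p_root (p : ℕ) [Fact p.Prime] [CharP K p] [IsSepClosed K]
    (v : Valuation K Γ₀) {s : K} (hs0 : s ≠ 0) (hs1 : v s < 1)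
    {a : K} (ha : a ≠ 0) (ha1 : v a ≤ 1) :
    ∃ x : K, x ≠ 0 ∧ (v x) ^ p = v a := by
  have hp2 : 2 ≤ p := (Fact.out : p.Prime).two_le
  have hp1 : 1 ≤ p := le_trans one_le_two hp2
  set c : K := s * a with hc_def
  have hc0 : c ≠ 0 := mul_ne_zero hs0 ha
  have hva : v a ≠ 0 := (Valuation.ne_zero_iff v).2 ha
  have hvc : v c ≠ 0 := (Valuation.ne_zero_iff v).2 hc0
  have hap1 : v a ^ (p - 1) ≠ 0 := pow_ne_zero _ hva
  have hc : v c ^ p < v a ^ (p - 1) := by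
    have h1 : v c ^ p = v s ^ p * v a ^ p := by rw [hc_def, map_mul, mul_pow]
    have h2 : v a ^ p ≤ v a ^ (p - 1) := pow_le_pow_right_of_le_one' ha1 (Nat.sub_le p 1)
    have h3 : v s ^ p < 1 := pow_lt_one₀ zero_le' hs1 (by omega)
    calc v c ^ p = v s ^ p * v a ^ p := h1
      _ ≤ v s ^ p * v a ^ (p - 1) := mul_le_mul_right h2 _
      _ < 1 * v a ^ (p - 1) := mul_lt_mul_of_le_of_lt_of_nonneg_of_pos le_rfl h3 zero_le' (zero_lt_iff.2 hap1) |>.trans_eq (mul_comm _ _) |>.trans_eq' (mul_comm _ _)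
      _ = v a ^ (p - 1) := one_mul _
  obtain ⟨x, hx⟩ := IsSepClosed.exists_root_C_mul_X_pow_add_C_mul_X_add_C' p p 1 c (-a)
    dvd_rfl hp2 hc0
  rw [one_mul] at hx
  have hxa : x ^ p + c * x = a := by linear_combination hx
  have hx0 : x ≠ 0 := by
    rintro rfl
    simp [zero_pow (by omega : p ≠ 0), eq_comm] at hxa
    exact ha hxa
  have hvx : v x ≠ 0 := (Valuation.ne_zero_iff v).2 hx0
  have key : v (c * x) < v (x ^ p) := by
    by_contra hle
    push_neg at hle
    have hva_le : v a ≤ v (c * x) := by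
      calc v a = v (x ^ p + c * x) := by rw [hxa]
        _ ≤ max (v (x ^ p)) (v (c * x)) := v.map_add _ _
        _ = v (c * x) := max_eq_right hle
    have hx_le : v x ^ (p - 1) ≤ v c := by
      have h : v x ^ (p - 1) * v x ≤ v c * v x := by
        calc v x ^ (p - 1) * v x = v x ^ p := by
              rw [← pow_succ]; congr 1; omega
          _ = v (x ^ p) := (v.map_pow _ _).symm
          _ ≤ v (c * x) := hle
          _ = v c * v x := v.map_mul _ _
      exact (mul_le_mul_iff_left₀ (zero_lt_iff.2 hvx)).1 h
    have : v a ^ (p - 1) ≤ v c ^ p := by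
      calc v a ^ (p - 1) ≤ (v c * v x) ^ (p - 1) := by
            refine pow_le_pow_left' ?_ _
            rwa [v.map_mul] at hva_le
        _ = v c ^ (p - 1) * v x ^ (p - 1) := mul_pow _ _ _
        _ ≤ v c ^ (p - 1) * v c := mul_le_mul_right hx_le _
        _ = v c ^ p := by rw [← pow_succ]; congr 1; omega
    exact absurd hc (not_lt.2 this)
  have : v a = v (x ^ p) := by
    rw [← hxa, add_comm, v.map_add_of_distinct_val (ne_of_lt key), max_eq_right key.le]
  exact ⟨x, hx0, by rw [← v.map_pow, ← this]⟩

end aux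

/-- The value group of a separably closed non-trivially valued field of characteristic `p`
is divisible: every value `v a` (with `a ≠ 0`) is an `n`-th power of a value `v x`. -/
theorem SepClosed.value_group_divisible
    (p : ℕ) [Fact p.Prime] {K Γ₀ : Type*} [Field K] [CharP K p] [IsSepClosed K]
    [LinearOrderedCommGroupWithZero Γ₀] (v : Valuation K Γ₀)
    (hv : ∃ t : K, t ≠ 0 ∧ v t ≠ 1) :
    ∀ a : K, a ≠ 0 → ∀ n : ℕ, 1 ≤ n → ∃ x : K, x ≠ 0 ∧ (v x) ^ n = v a := by
  -- get s with v s < 1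
  obtain ⟨t, ht0, ht1⟩ := hv
  obtain ⟨s, hs0, hs1⟩ : ∃ s : K, s ≠ 0 ∧ v s < 1 := by
    rcases lt_or_gt_of_ne ht1 with h | h
    · exact ⟨t, ht0, h⟩
    · refine ⟨t⁻¹, inv_ne_zero ht0, ?_⟩
      rw [map_inv₀]
      exact inv_lt_one_of_one_lt₀ h
  -- p-th root for all a (removing the v a ≤ 1 hypothesis)
  have proot : ∀ a : K, a ≠ 0 → ∃ x : K, x ≠ 0 ∧ (v x) ^ p = v a := by
    intro a ha
    rcases le_or_gt (v a) 1 with h | h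
    · exact SepClosed.aux_p_root p v hs0 hs1 ha h
    · have ha' : a⁻¹ ≠ 0 := inv_ne_zero ha
      have h' : v a⁻¹ ≤ 1 := by
        rw [map_inv₀]
        exact (inv_lt_one_of_one_lt₀ h).le
      obtain ⟨x, hx0, hx⟩ := SepClosed.aux_p_root p v hs0 hs1 ha' h'
      refine ⟨x⁻¹, inv_ne_zero hx0, ?_⟩
      rw [map_inv₀, inv_pow, hx, map_inv₀, inv_inv]
  -- n-th root for p ∤ n
  have qroot : ∀ n : ℕ, ¬ p ∣ n → 1 ≤ n → ∀ a : K, a ≠ 0 →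
      ∃ x : K, x ≠ 0 ∧ (v x) ^ n = v a := by
    intro n hpn hn a ha
    have hsep : (X ^ n - C a : K[X]).Separable := separable_X_pow_sub_C' p n a hpn ha
    have hdeg : (X ^ n - C a : K[X]).degree ≠ 0 := by
      rw [degree_X_pow_sub_C (by omega : 0 < n)]
      exact_mod_cast (by omega : n ≠ 0)
    obtain ⟨x, hx⟩ := IsSepClosed.exists_root _ hdeg hsep
    have hxn : x ^ n = a := by
      have := hx
      simp only [IsRoot, eval_sub, eval_pow, eval_X, eval_C, sub_eq_zero] at this
      exact this
    have hx0 : x ≠ 0 := by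
      rintro rfl
      exact ha (by rw [← hxn, zero_pow (by omega : n ≠ 0)])
    exact ⟨x, hx0, by rw [← v.map_pow, hxn]⟩
  -- main induction
  suffices H : ∀ n : ℕ, 1 ≤ n → ∀ a : K, a ≠ 0 → ∃ x : K, x ≠ 0 ∧ (v x) ^ n = v a by
    intro a ha n hn; exact H n hn a ha
  intro n
  induction n using Nat.strong_induction_on with
  | _ n IH =>
    intro hn a ha
    by_cases hpn : p ∣ n
    · obtain ⟨m, rfl⟩ := hpn
      have hp2 : 2 ≤ p := (Fact.out : p.Prime).two_le
      have hm1 : 1 ≤ m := by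
        rcases Nat.eq_zero_or_pos m with rfl | h
        · omega
        · exact h
      obtain ⟨y, hy0, hy⟩ := proot a ha
      obtain ⟨x, hx0, hx⟩ := IH m (by nlinarith) hm1 y hy0
      exact ⟨x, hx0, by rw [mul_comm, pow_mul, hx, hy]⟩
    · exact qroot n hpn hn a ha
end

section
/- Let p be a prime, K a separably closed field of characteristic p, Γ₀ a linearly ordered commutative group with zero, and v a nontrivial valuation on K with values in Γ₀. Then the residue field of the valuation ring of v is algebraically closed; concretely, for every monic polynomial P over K of degree ≥ 1 all of whose coefficients c satisfy v(c) ≤ 1, there exists x ∈ K with v(x) ≤ 1 and v(P(x)) < 1. -/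
open Polynomial

/-- A root of a monic polynomial with coefficients in the valuation ring lies in the
valuation ring. -/
private lemma aux_root_le_one {K Γ₀ : Type*} [Field K] [LinearOrderedCommGroupWithZero Γ₀]
    (v : Valuation K Γ₀) {S : Polynomial K} (hS : S.Monic) (hd : 1 ≤ S.natDegree)
    (hc : ∀ i, v (S.coeff i) ≤ 1) {x : K} (hx : S.eval x = 0) : v x ≤ 1 := by
  by_contra h
  push_neg at h
  set n := S.natDegree with hn
  have heval := Polynomial.eval_eq_sum_range (p := S) x
  rw [hx, Finset.sum_range_succ, hS.coeff_natDegree, one_mul] at heval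
  rw [← hn] at heval
  have hxn : x ^ n = -∑ i ∈ Finset.range n, S.coeff i * x ^ i := by
    linear_combination -heval
  have hbound : v (x ^ n) ≤ v x ^ (n - 1) := by
    rw [hxn, v.map_neg]
    apply v.map_sum_le
    intro i hi
    rw [Finset.mem_range] at hi
    calc v (S.coeff i * x ^ i) = v (S.coeff i) * v x ^ i := by
          rw [v.map_mul, v.map_pow]
      _ ≤ 1 * v x ^ i := mul_le_mul_left (hc i) _
      _ = v x ^ i := one_mul _
      _ ≤ v x ^ (n - 1) := pow_le_pow_right₀ h.le (by omega)
  rw [v.map_pow] at hbound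
  exact absurd hbound (not_le_of_gt (pow_lt_pow_right₀ h (by omega)))

/-- If `P` has nonzero derivative, then for all but finitely many `c` the polynomial
`P + C c` is coprime to `P'`; in particular a good `c` can be found in any infinite set. -/
private lemma aux_exists_good_c {K : Type*} [Field K] {P : Polynomial K}
    (hP' : P.derivative ≠ 0) {s : Set K} (hs : s.Infinite) :
    ∃ c ∈ s, IsCoprime (P + Polynomial.C c) P.derivative := by
  classical
  set L := AlgebraicClosure K
  set φ := algebraMap K L with hφ
  have hinj : Function.Injective φ := φ.injective
  set T : Finset L :=
    ((Polynomial.map φ P.derivative).roots.toFinset).image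
      (fun r => -(Polynomial.map φ P).eval r) with hT
  obtain ⟨c, hcs, hcT⟩ := hs.exists_notMem_finset (T.preimage φ (hinj.injOn))
  refine ⟨c, hcs, ?_⟩
  by_contra hnc
  rw [← Polynomial.isCoprime_map φ] at hnc
  set f := Polynomial.map φ (P + Polynomial.C c) with hf
  set g := Polynomial.map φ P.derivative with hg
  have hgne : g ≠ 0 := Polynomial.map_ne_zero hP'
  set d := EuclideanDomain.gcd f g with hd
  have hdnu : ¬ IsUnit d := fun hu => hnc (EuclideanDomain.gcd_isUnit_iff.mp hu)
  have hdf : d ∣ f := EuclideanDomain.gcd_dvd_left f g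
  have hdg : d ∣ g := EuclideanDomain.gcd_dvd_right f g
  have hdne : d ≠ 0 := fun h0 => hgne (by simpa [h0] using hdg)
  have hddeg : d.degree ≠ 0 := fun hdeg =>
    hdnu (Polynomial.isUnit_iff_degree_eq_zero.mpr hdeg)
  obtain ⟨r, hr⟩ := IsAlgClosed.exists_root d hddeg
  have hrf : f.IsRoot r := hr.dvd hdf
  have hrg : g.IsRoot r := hr.dvd hdg
  apply hcT
  rw [Finset.mem_preimage, hT, Finset.mem_image]
  refine ⟨r, ?_, ?_⟩
  · rw [Multiset.mem_toFinset, Polynomial.mem_roots hgne]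
    exact hrg
  · have : (Polynomial.map φ P).eval r + φ c = 0 := by
      have := hrf
      rw [Polynomial.IsRoot, hf, Polynomial.map_add, Polynomial.map_C,
        Polynomial.eval_add, Polynomial.eval_C] at this
      exact this
    linear_combination -this

/-- The residue field of a separably closed non-trivially valued field of characteristic `p`
is algebraically closed: every monic polynomial of degree `≥ 1` with coefficients in the
valuation ring has a root in the valuation ring modulo the maximal ideal, i.e. there is
`x` with `v x ≤ 1` and `v (P(x)) < 1`. -/
theorem SepClosed.residue_field_algClosed
    (p : ℕ) [Fact p.Prime] {K Γ₀ : Type*} [Field K] [CharP K p] [IsSepClosed K]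
    [LinearOrderedCommGroupWithZero Γ₀] (v : Valuation K Γ₀)
    (hv : ∃ t : K, t ≠ 0 ∧ v t ≠ 1)
    (P : Polynomial K) (hmonic : P.Monic) (hdeg : 1 ≤ P.natDegree)
    (hcoeff : ∀ i, v (P.coeff i) ≤ 1) :
    ∃ x : K, v x ≤ 1 ∧ v (P.eval x) < 1 := by
  classical
  -- find a small nonzero element `t`
  obtain ⟨t₀, ht₀, hvt₀⟩ := hv
  have hvt₀pos : 0 < v t₀ := lt_of_le_of_ne zero_le' (Ne.symm ((Valuation.ne_zero_iff v).mpr ht₀))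
  obtain ⟨t, ht, hvt, hvtpos⟩ : ∃ t : K, t ≠ 0 ∧ v t < 1 ∧ 0 < v t := by
    rcases lt_or_gt_of_ne hvt₀ with h | h
    · exact ⟨t₀, ht₀, h, hvt₀pos⟩
    · refine ⟨t₀⁻¹, inv_ne_zero ht₀, ?_, ?_⟩
      · rw [map_inv₀]
        exact (inv_lt_one₀ hvt₀pos).mpr h
      · rw [map_inv₀]
        exact inv_pos.mpr hvt₀pos
  have hPne : P ≠ 0 := hmonic.ne_zero
  have hPdeg : P.degree = (P.natDegree : WithBot ℕ) := Polynomial.degree_eq_natDegree hPne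
  by_cases hP' : P.derivative = 0
  · -- inseparable case: perturb by `t • X`
    -- first, the degree of `P` is at least `p ≥ 2`
    have hpn : (p : ℕ) ∣ P.natDegree := by
      have hco := Polynomial.coeff_derivative P (P.natDegree - 1)
      rw [hP', Polynomial.coeff_zero] at hco
      have h1 : P.natDegree - 1 + 1 = P.natDegree := by omega
      rw [h1, hmonic.coeff_natDegree, one_mul] at hco
      have : ((P.natDegree : ℕ) : K) = 0 := by
        have : ((P.natDegree - 1 : ℕ) : K) + 1 = 0 := by exact_mod_cast hco.symm
        calc ((P.natDegree : ℕ) : K) = ((P.natDegree - 1 + 1 : ℕ) : K) := by rw [h1]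
          _ = ((P.natDegree - 1 : ℕ) : K) + 1 := by push_cast; ring
          _ = 0 := this
      exact (CharP.cast_eq_zero_iff K p _).mp this
    have hp2 : 2 ≤ p := (Fact.out : p.Prime).two_le
    have hn2 : 2 ≤ P.natDegree := le_trans hp2 (Nat.le_of_dvd (by omega) hpn)
    set S := P + Polynomial.C t * Polynomial.X with hS
    have hdlt : (Polynomial.C t * Polynomial.X).degree < P.degree := by
      rw [Polynomial.degree_C_mul_X ht, hPdeg]
      exact_mod_cast (by omega : 1 < P.natDegree)
    have hSmonic : S.Monic := hmonic.add_of_left hdlt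
    have hSdeg : S.degree = P.degree := Polynomial.degree_add_eq_left_of_degree_lt hdlt
    have hSnat : S.natDegree = P.natDegree := by
      have := Polynomial.degree_eq_natDegree hSmonic.ne_zero
      rw [hSdeg, hPdeg] at this
      exact_mod_cast this.symm
    have hSder : S.derivative = Polynomial.C t := by
      rw [hS, Polynomial.derivative_add, hP', zero_add]
      simp
    have hSsep : S.Separable := by
      rw [Polynomial.Separable, hSder]
      exact ⟨0, Polynomial.C t⁻¹, by
        rw [zero_mul, zero_add, ← Polynomial.C_mul, inv_mul_cancel₀ ht, Polynomial.C_1]⟩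
    have hSdegne : S.degree ≠ 0 := by
      rw [hSdeg, hPdeg]
      exact_mod_cast (by omega : P.natDegree ≠ 0)
    obtain ⟨x, hx⟩ := IsSepClosed.exists_root S hSdegne hSsep
    have hxeval : P.eval x + t * x = 0 := by
      have := hx
      rw [Polynomial.IsRoot, hS, Polynomial.eval_add, Polynomial.eval_mul,
        Polynomial.eval_C, Polynomial.eval_X] at this
      exact this
    have hScoeff : ∀ i, v (S.coeff i) ≤ 1 := by
      intro i
      rw [hS, Polynomial.coeff_add]
      refine v.map_add_le (hcoeff i) ?_
      rw [Polynomial.coeff_C_mul, Polynomial.coeff_X]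
      by_cases hi : i = 1
      · subst hi
        simpa using hvt.le
      · rw [if_neg (fun h => hi h.symm), mul_zero, v.map_zero]
        exact zero_le_one
    have hxle : v x ≤ 1 :=
      aux_root_le_one v hSmonic (by omega) hScoeff hx
    refine ⟨x, hxle, ?_⟩
    have : P.eval x = -(t * x) := eq_neg_of_add_eq_zero_left hxeval
    rw [this, v.map_neg, v.map_mul]
    calc v t * v x ≤ v t * 1 := mul_le_mul_right hxle _
      _ = v t := mul_one _
      _ < 1 := hvt
  · -- separable-ish case: perturb by a small constant
    have hinj : Function.Injective (fun n : ℕ => t ^ (n + 1)) := by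
      intro a b hab
      simp only at hab
      by_contra hne
      rcases Nat.lt_or_ge a b with h | h
      · have := congrArg v hab
        rw [v.map_pow, v.map_pow] at this
        exact absurd this (ne_of_gt (pow_lt_pow_right_of_lt_one₀ hvtpos hvt (by omega)))
      · have hab' : b < a := by omega
        have := congrArg v hab
        rw [v.map_pow, v.map_pow] at this
        exact absurd this.symm
          (ne_of_gt (pow_lt_pow_right_of_lt_one₀ hvtpos hvt (by omega)))
    have hinf : (Set.range (fun n : ℕ => t ^ (n + 1))).Infinite :=
      Set.infinite_range_of_injective hinj
    obtain ⟨c, hcs, hcop⟩ := aux_exists_good_c hP' hinf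
    obtain ⟨n, hn⟩ := hcs
    have hcv : v c < 1 := by
      rw [← hn]
      simp only [v.map_pow]
      exact pow_lt_one₀ zero_le' hvt (by omega)
    set S := P + Polynomial.C c with hS
    have hdlt : (Polynomial.C c).degree < P.degree := by
      refine lt_of_le_of_lt (Polynomial.degree_C_le) ?_
      rw [hPdeg]
      exact_mod_cast (by omega : 0 < P.natDegree)
    have hSmonic : S.Monic := hmonic.add_of_left hdlt
    have hSdeg : S.degree = P.degree := Polynomial.degree_add_eq_left_of_degree_lt hdlt
    have hSnat : S.natDegree = P.natDegree := by
      have := Polynomial.degree_eq_natDegree hSmonic.ne_zero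
      rw [hSdeg, hPdeg] at this
      exact_mod_cast this.symm
    have hSder : S.derivative = P.derivative := by
      rw [hS, Polynomial.derivative_add, Polynomial.derivative_C, add_zero]
    have hSsep : S.Separable := by
      rw [Polynomial.Separable, hSder]
      exact hcop
    have hSdegne : S.degree ≠ 0 := by
      rw [hSdeg, hPdeg]
      exact_mod_cast (by omega : P.natDegree ≠ 0)
    obtain ⟨x, hx⟩ := IsSepClosed.exists_root S hSdegne hSsep
    have hxeval : P.eval x + c = 0 := by
      have := hx
      rw [Polynomial.IsRoot, hS, Polynomial.eval_add, Polynomial.eval_C] at this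
      exact this
    have hScoeff : ∀ i, v (S.coeff i) ≤ 1 := by
      intro i
      rw [hS, Polynomial.coeff_add]
      refine v.map_add_le (hcoeff i) ?_
      rw [Polynomial.coeff_C]
      by_cases hi : i = 0
      · simp only [hi, if_pos rfl]
        exact hcv.le
      · simp [hi]
    have hxle : v x ≤ 1 :=
      aux_root_le_one v hSmonic (by omega) hScoeff hx
    refine ⟨x, hxle, ?_⟩
    have : P.eval x = -c := eq_neg_of_add_eq_zero_left hxeval
    rw [this, v.map_neg]
    exact hcv
end

section
/- Let M be a field, F₀ a subfield of M, and let A, F, C be intermediate fields of M/F₀ with F₀ ⊆ C ⊆ F. If A and F are linearly disjoint over F₀, then the compositum A ⊔ C (the intermediate field generated by A and C) is linearly disjoint from F over C (as C-subalgebras of M), and (A ⊔ C) ∩ F = C. -/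
open IntermediateField in
private theorem aux_ld
    {F₀ M : Type*} [Field F₀] [Field M] [Algebra F₀ M]
    (A F C : IntermediateField F₀ M) (hCF : C ≤ F)
    (h : A.LinearDisjoint F) :
    (IntermediateField.extendScalars (show C ≤ A ⊔ C from le_sup_right)).LinearDisjoint
        (IntermediateField.extendScalars hCF) := by
  set A' := IntermediateField.extendScalars (show C ≤ A ⊔ C from le_sup_right) with hA'
  set F' := IntermediateField.extendScalars hCF with hF'
  set b := Module.Basis.ofVectorSpace C F' with hb
  apply IntermediateField.LinearDisjoint.of_basis_right b
  -- basis of A over F₀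
  set ba := Module.Basis.ofVectorSpace F₀ A with hba
  have haF : LinearIndependent F (A.val ∘ ba) := h.linearIndependent_left ba.linearIndependent
  -- span of the basis over C is the algebra adjoin
  have hD : Subalgebra.toSubmodule (Algebra.adjoin C (A : Set M))
      = Submodule.span C (Set.range (A.val ∘ ba)) := by
    have h1 : Subalgebra.toSubmodule (Algebra.adjoin C (A : Set M))
        = Submodule.span C (A : Set M) := by
      refine le_antisymm ?_ (Submodule.span_le.2 Algebra.subset_adjoin)
      rw [Algebra.adjoin_eq_span]
      refine Submodule.span_le.2 ?_
      intro x hx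
      exact Submodule.subset_span
        (Submonoid.closure_le (S := A.toSubalgebra.toSubmonoid) |>.2 (fun y hy => hy) hx)
    rw [h1]
    refine le_antisymm ?_ (Submodule.span_mono ?_)
    · refine Submodule.span_le.2 fun x hx => ?_
      have h2 : Submodule.span F₀ (Set.range (A.val ∘ ba)) = Submodule.map A.val.toLinearMap ⊤ := by
        rw [Set.range_comp, ← AlgHom.coe_toLinearMap, Submodule.span_image, ba.span_eq]
      have h3 : x ∈ Submodule.span F₀ (Set.range (A.val ∘ ba)) := by
        rw [h2]; exact ⟨⟨x, hx⟩, trivial, rfl⟩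
      exact Submodule.span_le_restrictScalars F₀ C _ h3
    · rintro _ ⟨k, rfl⟩
      exact (ba k).2
  -- membership: elements of A' are fractions
  have hfrac : ∀ x : A', ∃ z ∈ Algebra.adjoin C (A : Set M), z ≠ 0 ∧
      (x : M) * z ∈ Algebra.adjoin C (A : Set M) := by
    intro x
    have hx : (x : M) ∈ adjoin C (A : Set M) := by
      have hsup : A ⊔ C = restrictScalars F₀ (adjoin C (A : Set M)) := by
        rw [restrictScalars_adjoin_eq_sup, adjoin_self, sup_comm]
      have hx2 : (x : M) ∈ A ⊔ C := (mem_extendScalars _).1 x.2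
      rwa [hsup] at hx2
    rw [adjoin, mem_mk, Subring.mem_toSubsemiring, Subfield.mem_toSubring,
      Subfield.mem_closure_iff] at hx
    simp_rw [← Algebra.adjoin_eq_ring_closure, Subalgebra.mem_toSubring] at hx
    obtain ⟨y, hy, z, hz, hyz⟩ := hx
    rcases eq_or_ne z 0 with rfl | hz0
    · refine ⟨1, Subalgebra.one_mem _, one_ne_zero, ?_⟩
      rw [mul_one]
      have : (x : M) = 0 := by rw [← hyz, div_zero]
      rw [this]; exact Subalgebra.zero_mem _
    · refine ⟨z, hz, hz0, ?_⟩
      have : (x : M) * z = y := by rw [← hyz, div_mul_cancel₀ _ hz0]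
      rwa [this]
  classical
  rw [linearIndependent_iff']
  intro s g hg i hi
  -- denominators
  choose z hzmem hz0 hmul using fun j => hfrac (g j)
  set q : M := ∏ j ∈ s, z j with hq
  have hq0 : q ≠ 0 := Finset.prod_ne_zero_iff.2 fun j _ => hz0 j
  have hp : ∀ j ∈ s, (g j : M) * q ∈ Algebra.adjoin C (A : Set M) := by
    intro j hj
    rw [hq, ← Finset.mul_prod_erase s z hj, ← mul_assoc]
    exact mul_mem (hmul j) (prod_mem fun k _ => hzmem k)
  set p : _ → M := fun j => if j ∈ s then (g j : M) * q else 0 with hpdef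
  have hpmem : ∀ j, p j ∈ Submodule.span C (Set.range (A.val ∘ ba)) := by
    intro j
    rw [hpdef]
    by_cases hj : j ∈ s
    · simp only [hj, if_true]
      rw [← hD]
      exact hp j hj
    · simp only [hj, if_false]
      exact Submodule.zero_mem _
  choose c hcc using fun j => Finsupp.mem_span_range_iff_exists_finsupp.1 (hpmem j)
  set t := s.biUnion fun j => (c j).support with ht
  have hsupp : ∀ j ∈ s, (c j).support ⊆ t := fun j hj =>
    Finset.subset_biUnion_of_mem (fun j => (c j).support) hj
  -- the sum equation in M
  have hg' : ∑ j ∈ s, (g j : M) * (b j : M) = 0 := by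
    rw [← hg]
    refine Finset.sum_congr rfl fun j _ => ?_
    rw [Algebra.smul_def]
    rfl
  have hsum2 : ∑ j ∈ s, p j * (b j : M) = 0 := by
    calc ∑ j ∈ s, p j * (b j : M) = ∑ j ∈ s, ((g j : M) * (b j : M)) * q := by
          refine Finset.sum_congr rfl fun j hj => ?_
          rw [hpdef]; simp only [hj, if_true]; ring
      _ = (∑ j ∈ s, (g j : M) * (b j : M)) * q := (Finset.sum_mul _ _ _).symm
      _ = 0 := by rw [hg', zero_mul]
  -- rewrite via coordinates and swap sums
  have hcoord : ∀ j ∈ s, p j = ∑ k ∈ t, ((c j k : M)) * (A.val ∘ ba) k := by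
    intro j hj
    rw [← hcc j, Finsupp.sum_of_support_subset (c j) (hsupp j hj)
      (fun k r => r • (A.val ∘ ba) k) (fun k _ => by simp)]
    refine Finset.sum_congr rfl fun k _ => ?_
    rw [Algebra.smul_def]
    rfl
  have hswap : ∑ k ∈ t, (∑ j ∈ s, (c j k : M) * (b j : M)) * (A.val ∘ ba) k = 0 := by
    have e1 : ∑ j ∈ s, p j * (b j : M)
        = ∑ j ∈ s, ∑ k ∈ t, ((c j k : M) * (A.val ∘ ba) k) * (b j : M) := by
      refine Finset.sum_congr rfl fun j hj => ?_
      rw [hcoord j hj, Finset.sum_mul]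
    rw [← hsum2, e1, Finset.sum_comm]
    refine Finset.sum_congr rfl fun k _ => ?_
    rw [Finset.sum_mul]
    exact Finset.sum_congr rfl fun j _ => by ring
  -- coefficients as elements of F
  have hbF : ∀ j, ((b j : F') : M) ∈ F := fun j => (mem_extendScalars hCF).1 (b j).2
  set G : _ → F := fun k => ∑ j ∈ s, (⟨(c j k : M), hCF (c j k).2⟩ : F) * ⟨(b j : M), hbF j⟩
    with hG
  have hGcoe : ∀ k, (G k : M) = ∑ j ∈ s, (c j k : M) * (b j : M) := by
    intro k
    rw [hG]
    push_cast
    rfl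
  have hGzero : ∀ k ∈ t, G k = 0 := by
    refine linearIndependent_iff'.1 haF t G ?_
    calc ∑ k ∈ t, G k • (A.val ∘ ba) k
        = ∑ k ∈ t, (∑ j ∈ s, (c j k : M) * (b j : M)) * (A.val ∘ ba) k := by
          refine Finset.sum_congr rfl fun k _ => ?_
          rw [Algebra.smul_def, ← hGcoe k]
          rfl
      _ = 0 := hswap
  have hbM : LinearIndependent C (F'.val ∘ b) :=
    b.linearIndependent.map' F'.val.toLinearMap
      (LinearMap.ker_eq_bot.2 Subtype.val_injective)
  have hczero : ∀ k, ∀ j ∈ s, c j k = 0 := by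
    intro k
    by_cases hk : k ∈ t
    · refine linearIndependent_iff'.1 hbM s (fun j => c j k) ?_
      have h0 : ∑ j ∈ s, (c j k : M) * (b j : M) = 0 := by
        rw [← hGcoe k, hGzero k hk]
        simp
      calc ∑ j ∈ s, (c j k) • (F'.val ∘ b) j
          = ∑ j ∈ s, (c j k : M) * (b j : M) := by
            refine Finset.sum_congr rfl fun j _ => ?_
            rw [Algebra.smul_def]
            rfl
        _ = 0 := h0
    · intro j hj
      by_contra hne
      exact hk (hsupp j hj (Finsupp.mem_support_iff.2 hne))
  have hpc : p i = 0 := by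
    rw [← hcc i]
    have hci : c i = 0 := Finsupp.ext fun k => hczero k i hi
    rw [hci, Finsupp.sum_zero_index]
  have hgq : (g i : M) * q = 0 := by
    rw [hpdef] at hpc
    simpa [hi] using hpc
  have hg0 : (g i : M) = 0 := by
    rcases mul_eq_zero.1 hgq with h0 | h0
    · exact h0
    · exact absurd h0 hq0
  exact Subtype.ext hg0


/-- Lemma 4.5 (field-theoretic content): let `A`, `F`, `C` be intermediate fields of
`M/F₀` with `C ≤ F`. If `A` and `F` are linearly disjoint over `F₀`, then the compositum
`A ⊔ C` is linearly disjoint from `F` over `C`, and `(A ⊔ C) ∩ F = C`. -/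
theorem compositum_linearDisjoint_over_subfield
    {F₀ M : Type*} [Field F₀] [Field M] [Algebra F₀ M]
    (A F C : IntermediateField F₀ M) (hCF : C ≤ F)
    (h : A.LinearDisjoint F) :
    (IntermediateField.extendScalars (show C ≤ A ⊔ C from le_sup_right)).LinearDisjoint
        (IntermediateField.extendScalars hCF) ∧
      (A ⊔ C) ⊓ F = C := by
  have main := aux_ld A F C hCF h
  refine ⟨main, ?_⟩
  have h2 := main.inf_eq_bot
  rw [IntermediateField.extendScalars_inf] at h2
  have h3 := congrArg (IntermediateField.restrictScalars F₀) h2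
  rwa [IntermediateField.extendScalars_restrictScalars,
    IntermediateField.restrictScalars_bot_eq_self] at h3
end

section
/- Let M be a field, F₀ a subfield of M, and let A and F be intermediate fields of M/F₀ that are linearly disjoint over F₀. Let c ∈ M be transcendental over the compositum A ⊔ FC (the subfield of M generated by A and F). Then the intermediate field A(c) generated by A and c is linearly disjoint from F over F₀, and A(c) ∩ F = F₀. -/
open Polynomial IntermediateField

/-- Lemma 4.7 (field-theoretic content): let `A`, `F` be intermediate fields of `M/F₀`
that are linearly disjoint over `F₀`, and let `c ∈ M` be transcendental over the
compositum `A ⊔ F`. Then `A(c)` is linearly disjoint from `F` over `F₀`, and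
`A(c) ∩ F = F₀`. -/
theorem adjoin_transcendental_linearDisjoint
    {F₀ M : Type*} [Field F₀] [Field M] [Algebra F₀ M]
    (A F : IntermediateField F₀ M) (h : A.LinearDisjoint F)
    (c : M) (hc : Transcendental (↥(A ⊔ F)) c) :
    (A ⊔ IntermediateField.adjoin F₀ {c}).LinearDisjoint F ∧
      (A ⊔ IntermediateField.adjoin F₀ {c}) ⊓ F = ⊥ := by
  -- the inclusion of `A` into `A ⊔ F`
  set ι₁ : ↥A →ₐ[F₀] ↥(A ⊔ F) := IntermediateField.inclusion le_sup_left with hι₁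
  have hι₁inj : Function.Injective ι₁ := fun x y hxy =>
    Subtype.ext (congrArg (Subtype.val : ↥(A ⊔ F) → M) hxy)
  -- evaluation at `c` commutes with mapping coefficients along `ι₁`
  have haevmap : ∀ p : Polynomial ↥A,
      aeval c (p.map (ι₁ : ↥A →+* ↥(A ⊔ F))) = aeval c p := by
    intro p
    rw [aeval_def, aeval_def, eval₂_map]
    congr 1
  -- `aeval c` is injective on `(↥A)[X]` since `c` is transcendental over `A ⊔ F`
  have hinj : ∀ p : Polynomial ↥A, aeval c p = 0 → p = 0 := by
    intro p hp
    have h0 : aeval c (p.map (ι₁ : ↥A →+* ↥(A ⊔ F))) = 0 := by rw [haevmap]; exact hp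
    have := transcendental_iff.1 hc _ h0
    exact Polynomial.map_injective _ hι₁inj (by simpa using this)
  have hι₁coe : ∀ a : ↥A, ((ι₁ a : ↥(A ⊔ F)) : M) = (a : M) := fun a => rfl
  classical
  have main : (A ⊔ IntermediateField.adjoin F₀ {c}).LinearDisjoint F := by
    set bb := Module.Basis.ofVectorSpace F₀ ↥F with hbb
    refine IntermediateField.LinearDisjoint.of_basis_right bb ?_
    rw [linearIndependent_iff']
    intro s g hg i hi
    -- represent each `g j` as a rational function in `c` over `A`
    have hrep : ∀ j : Module.Basis.ofVectorSpaceIndex F₀ ↥F, ∃ p q : Polynomial ↥A,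
        q ≠ 0 ∧ (g j : M) = aeval c p / aeval c q := by
      intro j
      have hm : (g j : M) ∈ IntermediateField.restrictScalars F₀
          (IntermediateField.adjoin ↥A {c}) := by
        rw [IntermediateField.restrictScalars_adjoin_eq_sup]
        exact (g j).2
      obtain ⟨p, q, hpq⟩ := (IntermediateField.mem_adjoin_simple_iff ↥A _).1 hm
      by_cases hq : q = 0
      · exact ⟨0, 1, one_ne_zero, by simp [hpq, hq]⟩
      · exact ⟨p, q, hq, hpq⟩
    choose r d hd hgd using hrep
    have hda : ∀ j, aeval c (d j) ≠ 0 := fun j h0 => hd j (hinj _ h0)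
    -- common denominator and cleared numerators
    set q : Polynomial ↥A := ∏ j ∈ s, d j with hqdef
    have hqa : aeval c q ≠ 0 := by
      rw [hqdef, map_prod]
      exact Finset.prod_ne_zero_iff.2 fun j _ => hda j
    set t : Module.Basis.ofVectorSpaceIndex F₀ ↥F → Polynomial ↥A :=
      fun j => r j * ∏ k ∈ s.erase j, d k with htdef
    have haevt : ∀ j ∈ s, aeval c (t j) = (g j : M) * aeval c q := by
      intro j hj
      have hsplit : aeval c q = aeval c (d j) * ∏ k ∈ s.erase j, aeval c (d k) := by
        rw [hqdef, map_prod]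
        exact (Finset.mul_prod_erase _ _ hj).symm
      have hkey : (g j : M) * aeval c q
          = aeval c (r j) * ∏ k ∈ s.erase j, aeval c (d k) := by
        rw [hsplit, hgd j, div_mul_eq_mul_div, mul_comm (aeval c (d j)),
          ← mul_assoc, mul_div_assoc, div_self (hda j), mul_one]
      show aeval c (r j * ∏ k ∈ s.erase j, d k) = _
      rw [map_mul, map_prod, hkey]
    -- the polynomial over `A ⊔ F` that vanishes at `c`
    have hbmem : ∀ j, (bb j : M) ∈ A ⊔ F := fun j => (SetLike.le_def.1 (le_sup_right : F ≤ A ⊔ F)) (bb j).2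
    set P : Polynomial ↥(A ⊔ F) := ∑ j ∈ s,
      (t j).map (ι₁ : ↥A →+* ↥(A ⊔ F)) * Polynomial.C ⟨(bb j : M), hbmem j⟩ with hPdef
    have hsum : ∑ j ∈ s, (g j : M) * (bb j : M) = 0 := by
      have := hg
      simp only [Function.comp, Algebra.smul_def] at this
      simpa using this
    have haevP : aeval c P = 0 := by
      rw [hPdef, map_sum]
      have : ∀ j ∈ s, aeval c ((t j).map (ι₁ : ↥A →+* ↥(A ⊔ F))
          * Polynomial.C ⟨(bb j : M), hbmem j⟩) = ((g j : M) * (bb j : M)) * aeval c q := by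
        intro j hj
        rw [map_mul, aeval_C, haevmap, haevt j hj]
        show (g j : M) * aeval c q * ((⟨(bb j : M), hbmem j⟩ : ↥(A ⊔ F)) : M) = _
        ring
      rw [Finset.sum_congr rfl this, ← Finset.sum_mul, hsum, zero_mul]
    have hP0 : P = 0 := transcendental_iff.1 hc _ haevP
    -- extract coefficients
    have hAli : LinearIndependent ↥A (F.val ∘ ⇑bb) :=
      h.linearIndependent_right bb.linearIndependent
    have hcoeff : ∀ n, (t i).coeff n = 0 := by
      intro n
      have hc0 : P.coeff n = 0 := by rw [hP0]; simp
      rw [hPdef, Polynomial.finset_sum_coeff] at hc0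
      simp only [Polynomial.coeff_mul_C, Polynomial.coeff_map] at hc0
      have hc1 : ∑ j ∈ s, ((t j).coeff n : M) * (bb j : M) = 0 := by
        have h2 := congrArg (fun x : ↥(A ⊔ F) => (x : M)) hc0
        push_cast at h2
        simpa [hι₁coe] using h2
      refine linearIndependent_iff'.1 hAli s (fun j => (t j).coeff n) ?_ i hi
      simp only [Function.comp, Algebra.smul_def]
      simpa using hc1
    have ht0 : t i = 0 := Polynomial.ext fun n => by simpa using hcoeff n
    have : (g i : M) * aeval c q = 0 := by
      rw [← haevt i hi, ht0, map_zero]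
    have hgi : (g i : M) = 0 := by
      rcases mul_eq_zero.1 this with h' | h'
      · exact h'
      · exact absurd h' hqa
    exact Subtype.ext hgi
  exact ⟨main, main.inf_eq_bot⟩
end

section
/- Let K be a field, Γ₀ a linearly ordered commutative group with zero, v a valuation on K with values in Γ₀, ι a finite index type, P a multivariate polynomial over K in variables indexed by ι, and a : ι → K a point with P(a) ≠ 0. Then there exists a nonzero γ ∈ Γ₀ such that for every x : ι → K with v(x i − a i) < γ for all i ∈ ι, one has v(P(x) − P(a)) < v(P(a)); in particular v(P(x)) = v(P(a)) for all such x. -/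
/-- Local constancy of the leading term of a polynomial near a non-zero of `P`
(key computation in Lemma 4.9): if `P(a) ≠ 0`, then there is a nonzero `γ` such that
any point `x` with `v (x i − a i) < γ` for all `i` satisfies
`v (P(x) − P(a)) < v (P(a))`, hence `v (P(x)) = v (P(a))`. -/
theorem mvPolynomial_rv_locally_constant
    {K Γ₀ ι : Type*} [Field K] [LinearOrderedCommGroupWithZero Γ₀] [Finite ι]
    (v : Valuation K Γ₀) (P : MvPolynomial ι K) (a : ι → K)
    (ha : MvPolynomial.eval a P ≠ 0) :
    ∃ γ : Γ₀, γ ≠ 0 ∧ ∀ x : ι → K, (∀ i, v (x i - a i) < γ) →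
      v (MvPolynomial.eval x P - MvPolynomial.eval a P) < v (MvPolynomial.eval a P) ∧
      v (MvPolynomial.eval x P) = v (MvPolynomial.eval a P) := by
  letI : Valued K Γ₀ := Valued.mk' v
  have hvv : (Valued.v : Valuation K Γ₀) = v := rfl
  cases nonempty_fintype ι
  -- the target set is a neighborhood of `a`
  set U : Set (ι → K) :=
    {x | v (MvPolynomial.eval x P - MvPolynomial.eval a P) < v (MvPolynomial.eval a P)}
  have hU : U ∈ nhds a := by
    have hcont : Continuous fun x : ι → K => MvPolynomial.eval x P :=
      MvPolynomial.continuous_eval P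
    have hball : {y : K | v (y - MvPolynomial.eval a P) < v (MvPolynomial.eval a P)} ∈
        nhds (MvPolynomial.eval a P) := by
      rw [Valued.mem_nhds]
      exact ⟨Units.mk0 ((Valued.v : Valuation K Γ₀).restrict (MvPolynomial.eval a P)) (by simpa [hvv] using ha),
        fun y hy => (Valued.v : Valuation K Γ₀).restrict_lt_iff.mp hy⟩
    exact hcont.continuousAt.preimage_mem_nhds hball
  rw [nhds_pi, Filter.mem_pi'] at hU
  obtain ⟨I, t, ht, hsub⟩ := hU
  choose γi hγi using fun i => (Valued.mem_nhds.1 (ht i))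
  rcases isEmpty_or_nonempty ι with hι | hι
  · refine ⟨1, one_ne_zero, fun x _ => ?_⟩
    have hx : x = a := Subsingleton.elim x a
    subst hx
    refine ⟨?_, rfl⟩
    rw [sub_self, Valuation.map_zero]
    exact zero_lt_iff.2 ((Valuation.ne_zero_iff v).2 ha)
  · set γ : (MonoidWithZeroHom.ValueGroup₀ (.ofClass (Valued.v : Valuation K Γ₀)))ˣ :=
      Finset.univ.inf' Finset.univ_nonempty γi
    refine ⟨MonoidWithZeroHom.ValueGroup₀.embedding γ.1, fun h => γ.ne_zero
      (MonoidWithZeroHom.ValueGroup₀.embedding_injective (h.trans (map_zero _).symm)), fun x hx => ?_⟩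
    have hmem : x ∈ U := by
      apply hsub
      intro i _
      apply hγi i
      exact lt_of_lt_of_le ((Valued.v : Valuation K Γ₀).restrict_lt_iff_lt_embedding.2 (hx i)) (by exact_mod_cast Finset.inf'_le _ (Finset.mem_univ i))
    exact ⟨hmem, Valuation.map_eq_of_sub_lt v hmem⟩
end

section
/- Let K be an algebraically closed field, Γ₀ a linearly ordered commutative group with zero, and v a valuation on K with values in Γ₀. Let n ≥ 1 be an integer and a ∈ K an element with v(aⁿ − 1) < 1. Then there exists c ∈ K with cⁿ = 1 and v(a − c) < 1; equivalently, every n-torsion class of the leading-term group RV = K*/(1+m) is represented by an n-th root of unity of K. -/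
open Polynomial in
/-- Claim in the proof of quantifier elimination for ACVF in the leading-term language
(Fact 2.5): in an algebraically closed valued field, if `v (aⁿ − 1) < 1` then there is
an `n`-th root of unity `c` with `v (a − c) < 1`; i.e. every `n`-torsion class of
`RV = K*/(1+m)` is represented by an `n`-th root of unity. -/
theorem algClosed_root_of_unity_in_rv_class
    {K Γ₀ : Type*} [Field K] [IsAlgClosed K] [LinearOrderedCommGroupWithZero Γ₀]
    (v : Valuation K Γ₀) (n : ℕ) (hn : 1 ≤ n) (a : K)
    (ha : v (a ^ n - 1) < 1) :
    ∃ c : K, c ^ n = 1 ∧ v (a - c) < 1 := by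
  have hn0 : n ≠ 0 := by omega
  set p : K[X] := X ^ n - C 1 with hp
  have hmonic : p.Monic := monic_X_pow_sub_C 1 hn0
  have hsplits : p.Splits := IsAlgClosed.splits p
  have heq : p = (p.roots.map fun r => X - C r).prod :=
    hsplits.eq_prod_roots_of_monic hmonic
  have heval : a ^ n - 1 = (p.roots.map fun r => a - r).prod := by
    have := congrArg (eval a) heq
    simpa [hp, eval_multiset_prod, Multiset.map_map, Function.comp] using this
  have hroot : ∀ r ∈ p.roots, r ^ n = 1 := by
    intro r hr
    have := isRoot_of_mem_roots hr
    simp only [hp, IsRoot.def, eval_sub, eval_pow, eval_X, eval_C, sub_eq_zero] at this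
    exact this
  -- v a ≤ 1
  have hva : v a ≤ 1 := by
    by_contra h
    push_neg at h
    have h1 : (1 : Γ₀) < v (a ^ n) := by
      rw [map_pow]
      exact one_lt_pow₀ h hn0
    have h2 : v (a ^ n) ≤ 1 := by
      have : a ^ n = (a ^ n - 1) + 1 := by ring
      rw [this]
      refine le_trans (v.map_add _ _) ?_
      simp [le_of_lt ha]
    exact absurd (lt_of_lt_of_le h1 h2) (lt_irrefl _)
  -- each factor is ≤ 1
  have hfac : ∀ r ∈ p.roots, v (a - r) ≤ 1 := by
    intro r hr
    have hvr : v r ≤ 1 := by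
      by_contra h
      push_neg at h
      have : (1 : Γ₀) < v (r ^ n) := by
        rw [map_pow]; exact one_lt_pow₀ h hn0
      rw [hroot r hr, map_one] at this
      exact absurd this (lt_irrefl _)
    calc v (a - r) ≤ max (v a) (v r) := v.map_sub a r
      _ ≤ 1 := max_le hva hvr
  -- the product of the factors is < 1, so some factor is < 1
  have hprod : (p.roots.map fun r => v (a - r)).prod < 1 := by
    have : (p.roots.map fun r => v (a - r)) = ((p.roots.map fun r => a - r).map v) := by
      rw [Multiset.map_map]; rfl
    rw [this, ← map_multiset_prod v, ← heval]
    exact ha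
  by_contra hcon
  push_neg at hcon
  have hall : ∀ r ∈ p.roots, v (a - r) = 1 := fun r hr =>
    le_antisymm (hfac r hr) (hcon r (hroot r hr))
  have : (p.roots.map fun r => v (a - r)).prod = 1 := by
    apply Multiset.prod_eq_one
    intro x hx
    obtain ⟨r, hr, rfl⟩ := Multiset.mem_map.mp hx
    exact hall r hr
  rw [this] at hprod
  exact absurd hprod (lt_irrefl _)
end
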